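/- Gallai–Edmonds decomposition: For every maximum matching F of a graph G there is a partition of V(G) into sets Q, R, S such that (1) F restricted to Q is a perfect matching of the induced subgraph on Q; (2) R is the union of vertex sets of connected components H_i of G − S, each of which is hypomatchable, and F matches all of V(H_i) except one vertex r_i within H_i; (3) every vertex of S is matched by F, and for every s ∈ S the F-partner of s equals r_i for some component H_i. -/

import Mathlib

variable {V : Type*}

/-- A matching: a set of non-loop edges that are pairwise vertex-disjoint. -/
def IsMatching (M : Set (Sym2 V)) : Prop :=
  (∀ e ∈ M, ¬ e.IsDiag) ∧ ∀ e ∈ M, ∀ f ∈ M, e ≠ f → ∀ v, v ∈ e → v ∉ f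

/-- A vertex is covered by an edge set if it belongs to some edge. -/
def covered (M : Set (Sym2 V)) (v : V) : Prop := ∃ e ∈ M, v ∈ e

/-- A `K`–`F`-alternating path: a (simple) nonempty list of vertices whose
odd-numbered edges (0-indexed: even positions) lie in `K` and even-numbered edges lie in `F`. -/
def AltPath (K F : Set (Sym2 V)) (p : List V) : Prop :=
  p ≠ [] ∧ p.Nodup ∧ ∀ i, ∀ h : i + 1 < p.length,
    s(p[i]'(Nat.lt_of_succ_lt h), p[i+1]'h) ∈ (if i % 2 = 0 then K else F)


/-- `x` is evenly `K`-reachable from `a`: there is a `K`–`F`-alternating path from `a` to `x`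
with an even number of edges (an odd number of vertices); `x = a` via the empty path. -/
def evenReach (K F : Set (Sym2 V)) (a x : V) : Prop :=
  ∃ (p : List V) (hp : p ≠ []), AltPath K F p ∧ p.head hp = a ∧ p.getLast hp = x ∧
    Odd p.length

/-- `x` is oddly `K`-reachable from `a`: there is a `K`–`F`-alternating path from `a` to `x`
with an odd number of edges (an even, positive, number of vertices). -/
def oddReach (K F : Set (Sym2 V)) (a x : V) : Prop :=
  ∃ (p : List V) (hp : p ≠ []), AltPath K F p ∧ p.head hp = a ∧ p.getLast hp = x ∧
    Even p.length


/-- A maximum matching of the graph with edge set `E`. -/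
def IsMaxMatching (E F : Set (Sym2 V)) : Prop :=
  F ⊆ E ∧ IsMatching F ∧ ∀ M ⊆ E, IsMatching M → M.ncard ≤ F.ncard

/-- The edges of `F` contained in the vertex set `C` (the induced edge set `F[C]`). -/
def edgesIn (F : Set (Sym2 V)) (C : Set V) : Set (Sym2 V) := {e ∈ F | ∀ u ∈ e, u ∈ C}

/-- The edges of `E` avoiding the vertex set `S` (edges of `G − S`). -/
def avoid (E : Set (Sym2 V)) (S : Set V) : Set (Sym2 V) := {e ∈ E | ∀ u ∈ e, u ∉ S}

/-- The connected component of `v` in the graph with edge set `E'`. -/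
def comp (E' : Set (Sym2 V)) (v : V) : Set V :=
  {u | Relation.ReflTransGen (fun a b => s(a, b) ∈ E') v u}

/-- The induced subgraph on `C` is hypomatchable (factor-critical): for every `v ∈ C` there
is a matching inside `C` covering exactly `C \ {v}`. -/
def Hypomatchable (E : Set (Sym2 V)) (C : Set V) : Prop :=
  ∀ v ∈ C, ∃ M ⊆ edgesIn E C, IsMatching M ∧ ¬ covered M v ∧
    ∀ u ∈ C, u ≠ v → covered M u

/-- A Gallai–Edmonds decomposition `(Q, R, S)` of the graph `E` with respect to the maximum
matching `F`: (1) `F[Q]` is a perfect matching of `Q`; (2) `R` is a union of connected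
components of `G − S`, each hypomatchable and matched by `F` within itself except for exactly
one exposed vertex (its `r_i`); (3) every `s ∈ S` is matched by `F` to the exposed vertex
`r_i` of some component. -/
def IsGE (E F : Set (Sym2 V)) (Q R S : Set V) : Prop :=
  Q ∪ R ∪ S = Set.univ ∧ Disjoint Q R ∧ Disjoint Q S ∧ Disjoint R S ∧
  (∀ v ∈ Q, covered (edgesIn F Q) v) ∧
  (∀ v ∈ R, comp (avoid E S) v ⊆ R ∧ Hypomatchable E (comp (avoid E S) v) ∧
    (∃! w, w ∈ comp (avoid E S) v ∧ ¬ covered (edgesIn F (comp (avoid E S) v)) w)) ∧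
  (∀ s ∈ S, ∃ t, s(s, t) ∈ F ∧ t ∈ R ∧ ¬ covered (edgesIn F (comp (avoid E S) t)) t)

/-- `ER(K,F)`: the set of vertices evenly `K`-reachable from some `F`-uncovered vertex. -/
def ERset (K F : Set (Sym2 V)) : Set V := {x | ∃ a, ¬ covered F a ∧ evenReach K F a x}

/-- `OR(K,F)`: the set of vertices oddly `K`-reachable from some `F`-uncovered vertex. -/
def ORset (K F : Set (Sym2 V)) : Set V := {x | ∃ a, ¬ covered F a ∧ oddReach K F a x}

set_option linter.unusedSectionVars false
set_option linter.unusedVariables false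
section GEproof


section Basic
variable {M N : Set (Sym2 V)} {x u w : V}

lemma IsMatching.subset (hM : IsMatching M) (h : N ⊆ M) : IsMatching N :=
  ⟨fun e he => hM.1 e (h he), fun e he f hf hef v hv => hM.2 e (h he) f (h hf) hef v hv⟩

lemma isMatching_empty : IsMatching (∅ : Set (Sym2 V)) := ⟨fun e he => absurd he (by simp), fun e he => absurd he (by simp)⟩

lemma IsMatching.eq_of_mem (hM : IsMatching M) {e f : Sym2 V} (he : e ∈ M) (hf : f ∈ M)
    (hv : x ∈ e) (hv' : x ∈ f) : e = f := by
  by_contra h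
  exact hM.2 e he f hf h x hv hv'

lemma covered_iff : covered M x ↔ ∃ w, s(x, w) ∈ M := by
  constructor
  · rintro ⟨e, he, hv⟩
    obtain ⟨a, b, rfl⟩ : ∃ a b, e = s(a,b) := by
      induction e using Sym2.ind with | _ a b => exact ⟨a,b,rfl⟩
    rcases Sym2.mem_iff.1 hv with rfl | rfl
    · exact ⟨b, he⟩
    · exact ⟨a, by rwa [Sym2.eq_swap]⟩
  · rintro ⟨w, hw⟩; exact ⟨_, hw, by simp⟩

lemma ne_of_mk_mem (hM : IsMatching M) (h : s(x,u) ∈ M) : x ≠ u := by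
  intro he
  exact hM.1 _ h (by rw [he]; exact Sym2.mk_isDiag_iff.2 rfl)

lemma partner_unique (hM : IsMatching M) {a b : V} (ha : s(x,a) ∈ M) (hb : s(x,b) ∈ M) :
    a = b := by
  have h : s(x,a) = s(x,b) :=
    hM.eq_of_mem ha hb (Sym2.mem_iff.2 (Or.inl rfl)) (Sym2.mem_iff.2 (Or.inl rfl))
  have hx : x ≠ a := ne_of_mk_mem hM ha
  have := Sym2.mem_iff.1 (h ▸ (Sym2.mem_iff.2 (Or.inr rfl) : a ∈ s(x,a)))
  rcases this with h1 | h1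
  · exact absurd h1.symm hx
  · exact h1

lemma covered_insert {e : Sym2 V} : covered (insert e M) x ↔ x ∈ e ∨ covered M x := by
  constructor
  · rintro ⟨f, hf, hv⟩
    rcases hf with rfl | hf
    · exact Or.inl hv
    · exact Or.inr ⟨f, hf, hv⟩
  · rintro (h | ⟨f, hf, hv⟩)
    · exact ⟨e, Set.mem_insert _ _, h⟩
    · exact ⟨f, Set.mem_insert_of_mem _ hf, hv⟩

lemma IsMatching.insert {e : Sym2 V} (hM : IsMatching M) (he : ¬ e.IsDiag)
    (hc : ∀ v ∈ e, ¬ covered M v) : IsMatching (insert e M) := by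
  constructor
  · rintro f (rfl | hf)
    · exact he
    · exact hM.1 f hf
  · rintro f (rfl | hf) g (rfl | hg) hfg v hv hv'
    · exact hfg rfl
    · exact hc v hv ⟨g, hg, hv'⟩
    · exact hc v hv' ⟨f, hf, hv⟩
    · exact hM.2 f hf g hg hfg v hv hv'

lemma covered_diff_singleton (hM : IsMatching M) {f : Sym2 V} (hf : f ∈ M) :
    covered (M \ {f}) x ↔ covered M x ∧ x ∉ f := by
  constructor
  · rintro ⟨e, ⟨he, hef⟩, hv⟩
    refine ⟨⟨e, he, hv⟩, fun hxf => ?_⟩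
    have hne : e ≠ f := by simpa using hef
    exact hne (hM.eq_of_mem he hf hv hxf)
  · rintro ⟨⟨e, he, hv⟩, hxf⟩
    refine ⟨e, ⟨he, ?_⟩, hv⟩
    simp only [Set.mem_singleton_iff]
    rintro rfl; exact hxf hv

lemma not_covered_of_subset (h : N ⊆ M) (hx : ¬ covered M x) : ¬ covered N x :=
  fun ⟨e, he, hv⟩ => hx ⟨e, h he, hv⟩

lemma covered_of_subset (h : N ⊆ M) (hx : covered N x) : covered M x :=
  let ⟨e, he, hv⟩ := hx; ⟨e, h he, hv⟩

lemma exists_maxMatching [Fintype V] (E0 : Set (Sym2 V)) : ∃ F, IsMaxMatching E0 F := by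
  classical
  set S : Set ℕ := {n | ∃ M, M ⊆ E0 ∧ IsMatching M ∧ M.ncard = n} with hS
  have h0 : 0 ∈ S := ⟨∅, by simp, isMatching_empty, by simp⟩
  have hbdd : BddAbove S := by
    refine ⟨(Set.univ : Set (Sym2 V)).ncard, ?_⟩
    rintro n ⟨M, _, _, rfl⟩
    exact Set.ncard_le_ncard (Set.subset_univ M) (Set.toFinite _)
  obtain ⟨F, hFE, hFm, hFc⟩ := Nat.sSup_mem ⟨0, h0⟩ hbdd
  exact ⟨F, hFE, hFm, fun M hME hMm => hFc ▸ le_csSup hbdd ⟨M, hME, hMm, rfl⟩⟩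

lemma IsMaxMatching.of_ncard_eq {E0 : Set (Sym2 V)} (hF : IsMaxMatching E0 M)
    (hN : N ⊆ E0) (hNm : IsMatching N) (h : N.ncard = M.ncard) : IsMaxMatching E0 N :=
  ⟨hN, hNm, fun P hPE hPm => h ▸ hF.2.2 P hPE hPm⟩

end Basic
section TL
variable [Fintype V]

theorem transfer {M N : Set (Sym2 V)} (hM : IsMatching M) (hN : IsMatching N)
    {x : V} (hx1 : covered M x) (hx2 : ¬ covered N x) :
    (∃ N' M' t, t ≠ x ∧ covered M t ∧ ¬ covered N t ∧
      N' ⊆ M ∪ N ∧ IsMatching N' ∧ N'.ncard = N.ncard + 1 ∧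
      (∀ v, covered N' v ↔ covered N v ∨ v = x ∨ v = t) ∧
      M' ⊆ M ∪ N ∧ IsMatching M' ∧ M'.ncard + 1 = M.ncard ∧
      (∀ v, covered M' v ↔ covered M v ∧ v ≠ x ∧ v ≠ t)) ∨
    (∃ M' t, t ≠ x ∧ ¬ covered M t ∧ covered N t ∧
      M' ⊆ M ∪ N ∧ IsMatching M' ∧ M'.ncard = M.ncard ∧
      (∀ v, covered M' v ↔ (covered M v ∧ v ≠ x) ∨ v = t)) := by
  obtain ⟨n, hn⟩ : ∃ n, N.ncard = n := ⟨_, rfl⟩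
  induction n using Nat.strong_induction_on generalizing M N x with
  | _ n IH =>
  obtain ⟨u, he0⟩ := covered_iff.1 hx1
  have hxu : x ≠ u := ne_of_mk_mem hM he0
  have hcMu : covered M u := covered_iff.2 ⟨x, by rwa [Sym2.eq_swap]⟩
  by_cases hcu : covered N u
  · -- u is N-covered, get f = s(u,w)
    obtain ⟨w, hf⟩ := covered_iff.1 hcu
    have huw : u ≠ w := ne_of_mk_mem hN hf
    have hcNw : covered N w := covered_iff.2 ⟨u, by rwa [Sym2.eq_swap]⟩
    have hwx : w ≠ x := by
      rintro rfl
      exact hx2 hcNw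
    have hfe0 : s(u,w) ∉ M := by
      intro hmem
      have := hM.eq_of_mem he0 hmem (Sym2.mem_iff.2 (Or.inr rfl)) (Sym2.mem_iff.2 (Or.inl rfl))
      have hx_mem : x ∈ s(u,w) := this ▸ (Sym2.mem_iff.2 (Or.inl rfl))
      rcases Sym2.mem_iff.1 hx_mem with h | h
      · exact hxu h
      · exact hwx h.symm
    by_cases hcw : covered M w
    · -- recursive case
      set M₁ : Set (Sym2 V) := M \ {s(x,u)} with hM₁def
      set N₁ : Set (Sym2 V) := N \ {s(u,w)} with hN₁def
      have hM₁ : IsMatching M₁ := hM.subset Set.diff_subset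
      have hN₁ : IsMatching N₁ := hN.subset Set.diff_subset
      have cM1 : ∀ v, covered M₁ v ↔ covered M v ∧ v ≠ x ∧ v ≠ u := by
        intro v
        rw [hM₁def, covered_diff_singleton hM he0]
        simp [Sym2.mem_iff, not_or]
      have cN1 : ∀ v, covered N₁ v ↔ covered N v ∧ v ≠ u ∧ v ≠ w := by
        intro v
        rw [hN₁def, covered_diff_singleton hN hf]
        simp [Sym2.mem_iff, not_or]
      have cM1' : ∀ v, covered M v ↔ covered M₁ v ∨ v = x ∨ v = u := by
        intro v
        rw [cM1 v]
        constructor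
        · intro h
          rcases eq_or_ne v x with rfl | h1
          · exact Or.inr (Or.inl rfl)
          rcases eq_or_ne v u with rfl | h2
          · exact Or.inr (Or.inr rfl)
          · exact Or.inl ⟨h, h1, h2⟩
        · rintro (⟨h, _, _⟩ | rfl | rfl)
          · exact h
          · exact hx1
          · exact hcMu
      have cN1' : ∀ v, covered N v ↔ covered N₁ v ∨ v = u ∨ v = w := by
        intro v
        rw [cN1 v]
        constructor
        · intro h
          rcases eq_or_ne v u with rfl | h1
          · exact Or.inr (Or.inl rfl)
          rcases eq_or_ne v w with rfl | h2
          · exact Or.inr (Or.inr rfl)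
          · exact Or.inl ⟨h, h1, h2⟩
        · rintro (⟨h, _, _⟩ | rfl | rfl)
          · exact h
          · exact hcu
          · exact hcNw
      have hcovM₁w : covered M₁ w := (cM1 w).2 ⟨hcw, hwx, huw.symm⟩
      have hnotN₁w : ¬ covered N₁ w := by
        rw [cN1 w]; rintro ⟨-, -, h⟩; exact h rfl
      have hMcard : M₁.ncard + 1 = M.ncard :=
        Set.ncard_diff_singleton_add_one he0 (Set.toFinite _)
      have hNcard : N₁.ncard + 1 = N.ncard :=
        Set.ncard_diff_singleton_add_one hf (Set.toFinite _)
      have hn1 : N₁.ncard < n := by omega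
      have hnotM₁x : ¬ covered M₁ x := by rw [cM1]; rintro ⟨-, h, -⟩; exact h rfl
      have hnotN₁u : ¬ covered N₁ u := by rw [cN1]; rintro ⟨-, h, -⟩; exact h rfl
      have hnotM₁u : ¬ covered M₁ u := by rw [cM1]; rintro ⟨-, -, h⟩; exact h rfl
      have hnotN₁x : ¬ covered N₁ x := fun h => hx2 ((cN1' x).2 (Or.inl h))
      rcases IH N₁.ncard hn1 hM₁ hN₁ hcovM₁w hnotN₁w rfl with
        ⟨N₁', M₁', t, htw, htM₁, htN₁, hsubN, hmatN, hcardN, hcovN, hsubM, hmatM, hcardM, hcovM⟩ |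
        ⟨M₁', t, htw, htM₁not, htN₁cov, hsub, hmat, hcard, hcov⟩
      · -- IH Left
        obtain ⟨htMt, htx, htu⟩ := (cM1 t).1 htM₁
        have htN : ¬ covered N t := by
          rw [cN1' t]
          rintro (h | rfl | rfl)
          · exact htN₁ h
          · exact htu rfl
          · exact htw rfl
        refine Or.inl ⟨insert s(x,u) N₁', insert s(u,w) M₁', t, htx, htMt, htN, ?_, ?_, ?_, ?_, ?_, ?_, ?_, ?_⟩
        · -- subset
          refine Set.insert_subset (Or.inl he0) (hsubN.trans ?_)
          exact Set.union_subset_union Set.diff_subset Set.diff_subset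
        · -- matching
          refine hmatN.insert (hM.1 _ he0) ?_
          intro v hv
          rcases Sym2.mem_iff.1 hv with rfl | rfl
          · rw [hcovN]
            rintro (h | rfl | rfl)
            · exact hnotN₁x h
            · exact hwx rfl
            · exact htx rfl
          · rw [hcovN]
            rintro (h | rfl | rfl)
            · exact hnotN₁u h
            · exact huw rfl
            · exact htu rfl
        · -- ncard
          have hnotmem : s(x,u) ∉ N₁' := by
            intro h
            have : covered N₁' x := ⟨_, h, Sym2.mem_iff.2 (Or.inl rfl)⟩
            rw [hcovN] at this
            rcases this with h' | rfl | h'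
            · exact hnotN₁x h'
            · exact hwx rfl
            · exact htx h'.symm
          rw [Set.ncard_insert_of_notMem hnotmem (Set.toFinite _), hcardN]
          omega
        · -- covered N'
          intro v
          rw [covered_insert, hcovN, cN1' v, Sym2.mem_iff]
          constructor
          · rintro ((rfl | rfl) | h | rfl | rfl)
            · exact Or.inr (Or.inl rfl)
            · exact Or.inl (Or.inr (Or.inl rfl))
            · exact Or.inl (Or.inl h)
            · exact Or.inl (Or.inr (Or.inr rfl))
            · exact Or.inr (Or.inr rfl)
          · rintro ((h | rfl | rfl) | rfl | rfl)
            · exact Or.inr (Or.inl h)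
            · exact Or.inl (Or.inr rfl)
            · exact Or.inr (Or.inr (Or.inl rfl))
            · exact Or.inl (Or.inl rfl)
            · exact Or.inr (Or.inr (Or.inr rfl))
        · -- subset M'
          refine Set.insert_subset (Or.inr hf) (hsubM.trans ?_)
          exact Set.union_subset_union Set.diff_subset Set.diff_subset
        · -- matching M'
          refine hmatM.insert (hN.1 _ hf) ?_
          intro v hv
          rcases Sym2.mem_iff.1 hv with rfl | rfl
          · rw [hcovM]
            rintro ⟨h, -, -⟩
            exact hnotM₁u h
          · rw [hcovM]
            rintro ⟨-, h, -⟩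
            exact h rfl
        · -- ncard M'
          have hnotmem : s(u,w) ∉ M₁' := by
            intro h
            have : covered M₁' w := ⟨_, h, Sym2.mem_iff.2 (Or.inr rfl)⟩
            rw [hcovM] at this
            exact this.2.1 rfl
          rw [Set.ncard_insert_of_notMem hnotmem (Set.toFinite _)]
          omega
        · -- covered M'
          intro v
          rw [covered_insert, hcovM, Sym2.mem_iff]
          constructor
          · rintro ((rfl | rfl) | ⟨h, hvw, hvt⟩)
            · exact ⟨hcMu, hxu.symm, htu.symm⟩
            · exact ⟨hcw, hwx, fun h => htw h.symm⟩
            · obtain ⟨hMv, hvx, hvu⟩ := (cM1 v).1 h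
              exact ⟨hMv, hvx, hvt⟩
          · rintro ⟨hMv, hvx, hvt⟩
            rcases eq_or_ne v u with rfl | hvu
            · exact Or.inl (Or.inl rfl)
            rcases eq_or_ne v w with rfl | hvw
            · exact Or.inl (Or.inr rfl)
            · exact Or.inr ⟨(cM1 v).2 ⟨hMv, hvx, hvu⟩, hvw, hvt⟩
      · -- IH Right
        obtain ⟨htNt, htu, htw2⟩ := (cN1 t).1 htN₁cov
        have htx : t ≠ x := by
          rintro rfl
          exact hx2 htNt
        have htM : ¬ covered M t := by
          rw [cM1' t]
          rintro (h | rfl | rfl)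
          · exact htM₁not h
          · exact htx rfl
          · exact htu rfl
        refine Or.inr ⟨insert s(u,w) M₁', t, htx, htM, htNt, ?_, ?_, ?_, ?_⟩
        · refine Set.insert_subset (Or.inr hf) (hsub.trans ?_)
          exact Set.union_subset_union Set.diff_subset Set.diff_subset
        · refine hmat.insert (hN.1 _ hf) ?_
          intro v hv
          rcases Sym2.mem_iff.1 hv with rfl | rfl
          · rw [hcov]
            rintro (⟨h, -⟩ | rfl)
            · exact hnotM₁u h
            · exact htu rfl
          · rw [hcov]
            rintro (⟨-, h⟩ | rfl)
            · exact h rfl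
            · exact htw2 rfl
        · have hnotmem : s(u,w) ∉ M₁' := by
            intro h
            have : covered M₁' w := ⟨_, h, Sym2.mem_iff.2 (Or.inr rfl)⟩
            rw [hcov] at this
            rcases this with ⟨-, h'⟩ | rfl
            · exact h' rfl
            · exact htw2 rfl
          rw [Set.ncard_insert_of_notMem hnotmem (Set.toFinite _), hcard]
          omega
        · intro v
          rw [covered_insert, hcov, Sym2.mem_iff]
          constructor
          · rintro ((rfl | rfl) | ⟨h, hvw⟩ | rfl)
            · exact Or.inl ⟨hcMu, hxu.symm⟩
            · exact Or.inl ⟨hcw, hwx⟩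
            · obtain ⟨hMv, hvx, _⟩ := (cM1 v).1 h
              exact Or.inl ⟨hMv, hvx⟩
            · exact Or.inr rfl
          · rintro (⟨hMv, hvx⟩ | rfl)
            · rcases eq_or_ne v u with rfl | hvu
              · exact Or.inl (Or.inl rfl)
              rcases eq_or_ne v w with rfl | hvw
              · exact Or.inl (Or.inr rfl)
              · exact Or.inr (Or.inl ⟨(cM1 v).2 ⟨hMv, hvx, hvu⟩, hvw⟩)
            · exact Or.inr (Or.inr rfl)
    · -- w not M-covered: terminal RIGHT
      refine Or.inr ⟨insert s(u,w) (M \ {s(x,u)}), w, hwx, hcw, hcNw, ?_, ?_, ?_, ?_⟩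
      · refine Set.insert_subset (Or.inr hf) ?_
        exact (Set.diff_subset.trans Set.subset_union_left)
      · refine (hM.subset Set.diff_subset).insert (hN.1 _ hf) ?_
        intro v hv
        rcases Sym2.mem_iff.1 hv with rfl | rfl
        · rw [covered_diff_singleton hM he0]
          rintro ⟨-, h⟩
          exact h (Sym2.mem_iff.2 (Or.inr rfl))
        · rw [covered_diff_singleton hM he0]
          rintro ⟨h, -⟩
          exact hcw h
      · have hnotmem : s(u,w) ∉ M \ {s(x,u)} := fun h => hfe0 h.1
        rw [Set.ncard_insert_of_notMem hnotmem (Set.toFinite _),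
          Set.ncard_diff_singleton_add_one he0 (Set.toFinite _)]
      · intro v
        rw [covered_insert, covered_diff_singleton hM he0, Sym2.mem_iff, Sym2.mem_iff]
        constructor
        · rintro ((rfl | rfl) | ⟨h, hne⟩)
          · exact Or.inl ⟨hcMu, hxu.symm⟩
          · exact Or.inr rfl
          · exact Or.inl ⟨h, fun hvx => hne (Or.inl hvx)⟩
        · rintro (⟨hMv, hvx⟩ | rfl)
          · rcases eq_or_ne v u with rfl | hvu
            · exact Or.inl (Or.inl rfl)
            · exact Or.inr ⟨hMv, by rintro (h | h); exact hvx h; exact hvu h⟩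
          · exact Or.inl (Or.inr rfl)
  · -- u not N-covered: terminal LEFT
    refine Or.inl ⟨insert s(x,u) N, M \ {s(x,u)}, u, hxu.symm, hcMu, hcu, ?_, ?_, ?_, ?_, ?_, ?_, ?_, ?_⟩
    · exact Set.insert_subset (Or.inl he0) Set.subset_union_right
    · refine hN.insert (hM.1 _ he0) ?_
      intro v hv
      rcases Sym2.mem_iff.1 hv with rfl | rfl
      · exact hx2
      · exact hcu
    · have hnotmem : s(x,u) ∉ N := fun h => hx2 ⟨_, h, Sym2.mem_iff.2 (Or.inl rfl)⟩
      rw [Set.ncard_insert_of_notMem hnotmem (Set.toFinite _)]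
    · intro v
      rw [covered_insert, Sym2.mem_iff]
      tauto
    · exact Set.diff_subset.trans Set.subset_union_left
    · exact hM.subset Set.diff_subset
    · exact Set.ncard_diff_singleton_add_one he0 (Set.toFinite _)
    · intro v
      rw [covered_diff_singleton hM he0, Sym2.mem_iff]
      tauto

end TL
set_option linter.unusedSectionVars false
section Stab
variable [Fintype V]

def Dset (E : Set (Sym2 V)) : Set V := {x | ∃ M, IsMaxMatching E M ∧ ¬ covered M x}

def Aset (E : Set (Sym2 V)) : Set V := {x | x ∉ Dset E ∧ ∃ y ∈ Dset E, s(x,y) ∈ E}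

variable {E F M : Set (Sym2 V)} {a x y : V}

lemma covered_of_max (hF : IsMaxMatching E F) (ha : a ∉ Dset E) : covered F a := by
  by_contra h
  exact ha ⟨F, hF, h⟩

lemma maxMatching_ncard_eq {F₁ F₂ : Set (Sym2 V)} (h1 : IsMaxMatching E F₁)
    (h2 : IsMaxMatching E F₂) : F₁.ncard = F₂.ncard :=
  le_antisymm (h2.2.2 _ h1.1 h1.2.1) (h1.2.2 _ h2.1 h2.2.1)

lemma stab_nu (hF : IsMaxMatching E F) (ha : a ∉ Dset E) :
    IsMaxMatching (avoid E {a}) {e ∈ F | a ∉ e} ∧ ({e ∈ F | a ∉ e}).ncard + 1 = F.ncard := by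
  have hcov : covered F a := covered_of_max hF ha
  obtain ⟨b, hb⟩ := covered_iff.1 hcov
  have heq : {e ∈ F | a ∉ e} = F \ {s(a,b)} := by
    ext e
    simp only [Set.mem_setOf_eq, Set.mem_diff, Set.mem_singleton_iff]
    constructor
    · rintro ⟨he, ha'⟩
      exact ⟨he, fun h => ha' (h ▸ Sym2.mem_iff.2 (Or.inl rfl))⟩
    · rintro ⟨he, hne⟩
      exact ⟨he, fun h => hne (hF.2.1.eq_of_mem he hb h (Sym2.mem_iff.2 (Or.inl rfl)))⟩
  have hsub : {e ∈ F | a ∉ e} ⊆ avoid E {a} := by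
    rintro e ⟨he, ha'⟩
    exact ⟨hF.1 he, fun u hu => by simp only [Set.mem_singleton_iff]; rintro rfl; exact ha' hu⟩
  have hcard : ({e ∈ F | a ∉ e}).ncard + 1 = F.ncard := by
    rw [heq]; exact Set.ncard_diff_singleton_add_one hb (Set.toFinite _)
  refine ⟨⟨hsub, hF.2.1.subset (by rw [heq]; exact Set.diff_subset), ?_⟩, hcard⟩
  intro P hPE hPm
  have hPE' : P ⊆ E := hPE.trans (fun e he => he.1)
  have hle : P.ncard ≤ F.ncard := hF.2.2 P hPE' hPm
  have hne : P.ncard ≠ F.ncard := by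
    intro h
    refine ha ⟨P, hF.of_ncard_eq hPE' hPm h, ?_⟩
    rintro ⟨e, he, hv⟩
    exact (hPE he).2 a hv rfl
  omega

lemma Dset_avoid_of_not_mem (ha : a ∉ Dset E) : Dset E ⊆ Dset (avoid E {a}) := by
  rintro x ⟨M, hM, hx⟩
  obtain ⟨hmax, _⟩ := stab_nu hM ha
  exact ⟨_, hmax, fun hc => hx (covered_of_subset (fun e he => he.1) hc)⟩

lemma self_mem_Dset_avoid : a ∈ Dset (avoid E {a}) := by
  obtain ⟨M, hM⟩ := exists_maxMatching (avoid E {a})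
  refine ⟨M, hM, ?_⟩
  rintro ⟨e, he, hv⟩
  exact (hM.1 he).2 a hv rfl

lemma stab_hard (hE : ∀ e ∈ E, ¬ e.IsDiag) (ha : a ∈ Aset E) :
    Dset (avoid E {a}) ⊆ Dset E ∪ {a} := by
  rintro x ⟨M', hM', hx'⟩
  rcases eq_or_ne x a with rfl | hxa
  · exact Or.inr rfl
  refine Or.inl ?_
  obtain ⟨haD, y, hyD, hay⟩ := ha
  obtain ⟨M, hMmax, hMy⟩ := id hyD
  by_cases hMx : covered M x
  swap
  · exact ⟨M, hMmax, hMx⟩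
  have hanotM' : ¬ covered M' a := by
    rintro ⟨e, he, hv⟩
    exact (hM'.1 he).2 a hv rfl
  have hMcova : covered M a := covered_of_max hMmax haD
  have hsubE : M ∪ M' ⊆ E := Set.union_subset hMmax.1 (hM'.1.trans (fun e he => he.1))
  have hnu : ∀ P, P ⊆ avoid E {a} → IsMatching P → P.ncard + 1 ≤ M.ncard := by
    intro P hPs hPm
    have h1 := (stab_nu hMmax haD).1.2.2 P hPs hPm
    have h2 := (stab_nu hMmax haD).2
    omega
  have hnu' : M'.ncard + 1 = M.ncard := by
    have h1 := maxMatching_ncard_eq hM' (stab_nu hMmax haD).1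
    have h2 := (stab_nu hMmax haD).2
    omega
  rcases transfer hMmax.2.1 hM'.2.1 hMx hx' with
    ⟨N', M'', t, htx, htM, htN, hsubN, hmatN, hcardN, hcovN, hsubM, hmatM, hcardM, hcovM⟩ |
    ⟨Mh, t, htx, htM, htN, hsub, hmat, hcard, hcov⟩
  · rcases eq_or_ne a t with rfl | hta
    · -- t = a : use M'' plus edge s(a,y)
      have hM''a : ¬ covered M'' a := by
        rw [hcovM]; rintro ⟨-, -, h⟩; exact h rfl
      have hM''y : ¬ covered M'' y := by
        rw [hcovM]; rintro ⟨h, -⟩; exact hMy h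
      have hay' : a ≠ y := fun h => haD (h ▸ hyD)
      have hmat2 : IsMatching (insert s(a,y) M'') := by
        refine hmatM.insert (hE _ hay) ?_
        intro v hv
        rcases Sym2.mem_iff.1 hv with rfl | rfl
        · exact hM''a
        · exact hM''y
      have hnotmem : s(a,y) ∉ M'' := fun h => hM''a ⟨_, h, Sym2.mem_iff.2 (Or.inl rfl)⟩
      have hcard2 : (insert s(a,y) M'').ncard = M.ncard := by
        rw [Set.ncard_insert_of_notMem hnotmem (Set.toFinite _)]
        omega
      refine ⟨insert s(a,y) M'', hMmax.of_ncard_eq ?_ hmat2 hcard2, ?_⟩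
      · exact Set.insert_subset hay (hsubM.trans hsubE)
      · rw [covered_insert, Sym2.mem_iff, hcovM]
        rintro ((rfl | rfl) | ⟨-, h, -⟩)
        · exact hxa rfl
        · exact hMy hMx
        · exact h rfl
    · -- t ≠ a : N' is a matching in avoid E {a} that is too big
      exfalso
      have hN'a : ¬ covered N' a := by
        rw [hcovN]
        rintro (h | rfl | rfl)
        · exact hanotM' h
        · exact hxa rfl
        · exact hta rfl
      have hN'sub : N' ⊆ avoid E {a} := by
        intro e he
        refine ⟨hsubE (hsubN he), fun v hv => ?_⟩
        simp only [Set.mem_singleton_iff]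
        rintro rfl
        exact hN'a ⟨e, he, hv⟩
      have := hnu N' hN'sub hmatN
      omega
  · -- Right case: Mh is max in E missing x
    refine ⟨Mh, hMmax.of_ncard_eq (hsub.trans hsubE) hmat hcard, ?_⟩
    rw [hcov]
    rintro (⟨-, h⟩ | rfl)
    · exact h rfl
    · exact htx rfl

lemma Dset_avoid_eq (hE : ∀ e ∈ E, ¬ e.IsDiag) (ha : a ∈ Aset E) :
    Dset (avoid E {a}) = Dset E ∪ {a} := by
  refine le_antisymm (stab_hard hE ha) ?_
  rintro x (hx | rfl)
  · exact Dset_avoid_of_not_mem ha.1 hx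
  · exact self_mem_Dset_avoid

lemma Aset_avoid_eq (hE : ∀ e ∈ E, ¬ e.IsDiag) (ha : a ∈ Aset E) :
    Aset (avoid E {a}) = Aset E \ {a} := by
  ext x
  rw [Aset, Set.mem_setOf_eq, Dset_avoid_eq hE ha]
  constructor
  · rintro ⟨hx, y, hy, hedge⟩
    have hya : y ≠ a := by
      rintro rfl
      exact hedge.2 y (Sym2.mem_iff.2 (Or.inr rfl)) rfl
    have hxa : x ≠ a := by
      rintro rfl
      exact hedge.2 x (Sym2.mem_iff.2 (Or.inl rfl)) rfl
    rcases hy with hy | rfl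
    · exact ⟨⟨fun h => hx (Or.inl h), y, hy, hedge.1⟩, hxa⟩
    · exact absurd rfl hya
  · rintro ⟨⟨hx, y, hy, hedge⟩, hxa⟩
    have hya : y ≠ a := fun h => ha.1 (h ▸ hy)
    refine ⟨?_, y, Or.inl hy, hedge, ?_⟩
    · rintro (h | h)
      · exact hx h
      · exact hxa h
    · intro v hv
      simp only [Set.mem_singleton_iff]
      rcases Sym2.mem_iff.1 hv with rfl | rfl
      · rintro rfl; exact hxa rfl
      · rintro rfl; exact hya rfl

end Stab
section Remove
variable [Fintype V]
variable {E F : Set (Sym2 V)} {a x y : V}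

lemma avoid_empty : avoid E (∅ : Set V) = E := by
  ext e; simp [avoid]

lemma avoid_avoid {S T : Set V} : avoid (avoid E S) T = avoid E (S ∪ T) := by
  ext e
  simp only [avoid, Set.mem_setOf_eq, Set.mem_union]
  constructor
  · rintro ⟨⟨he, h1⟩, h2⟩
    exact ⟨he, fun u hu => by rintro (h | h); exacts [h1 u hu h, h2 u hu h]⟩
  · rintro ⟨he, h⟩
    exact ⟨⟨he, fun u hu hS => h u hu (Or.inl hS)⟩, fun u hu hT => h u hu (Or.inr hT)⟩

lemma removeA : ∀ k : ℕ, ∀ E F : Set (Sym2 V), (∀ e ∈ E, ¬ e.IsDiag) → IsMaxMatching E F →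
    (Aset E).ncard ≤ k →
    IsMaxMatching (avoid E (Aset E)) {e ∈ F | ∀ u ∈ e, u ∉ Aset E} ∧
    Dset (avoid E (Aset E)) = Dset E ∪ Aset E := by
  intro k
  induction k with
  | zero =>
    intro E F hE hF hle
    have hA : Aset E = ∅ := by
      rw [← Set.ncard_eq_zero (Set.toFinite _)]; omega
    rw [hA, avoid_empty]
    constructor
    · have : {e ∈ F | ∀ u ∈ e, u ∉ (∅ : Set V)} = F := by ext e; simp
      rw [this]; exact hF
    · simp
  | succ k IH =>
    intro E F hE hF hle
    rcases Set.eq_empty_or_nonempty (Aset E) with hA | ⟨a, ha⟩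
    · rw [hA, avoid_empty]
      constructor
      · have : {e ∈ F | ∀ u ∈ e, u ∉ (∅ : Set V)} = F := by ext e; simp
        rw [this]; exact hF
      · simp
    · set E₁ := avoid E {a} with hE₁def
      have hE₁ : ∀ e ∈ E₁, ¬ e.IsDiag := fun e he => hE e he.1
      have hF₁ : IsMaxMatching E₁ {e ∈ F | a ∉ e} := (stab_nu hF ha.1).1
      have hA₁ : Aset E₁ = Aset E \ {a} := Aset_avoid_eq hE ha
      have hcard : (Aset E \ {a}).ncard + 1 = (Aset E).ncard :=
        Set.ncard_diff_singleton_add_one ha (Set.toFinite _)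
      have hle₁ : (Aset E₁).ncard ≤ k := by rw [hA₁]; omega
      obtain ⟨hmax₁, hD₁⟩ := IH E₁ _ hE₁ hF₁ hle₁
      have hunion : {a} ∪ (Aset E \ {a}) = Aset E :=
        Set.union_diff_cancel (by simpa using ha)
      have heq1 : avoid E₁ (Aset E₁) = avoid E (Aset E) := by
        rw [hA₁, hE₁def, avoid_avoid, hunion]
      have heq2 : {e ∈ {e ∈ F | a ∉ e} | ∀ u ∈ e, u ∉ Aset E₁} =
          {e ∈ F | ∀ u ∈ e, u ∉ Aset E} := by
        rw [hA₁]
        ext e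
        constructor
        · rintro ⟨⟨he, hae⟩, h⟩
          refine ⟨he, fun u hu hA' => ?_⟩
          have h2 := h u hu
          have hua : u = a := by
            by_contra hne
            exact h2 ⟨hA', by simpa using hne⟩
          subst hua
          exact hae hu
        · rintro ⟨he, h⟩
          exact ⟨⟨he, fun hae => h a hae ha⟩, fun u hu hd => h u hu hd.1⟩
      have hD₂ : Dset E₁ = Dset E ∪ {a} := Dset_avoid_eq hE ha
      constructor
      · rw [← heq1, ← heq2]; exact hmax₁
      · rw [← heq1, hD₁, hD₂, hA₁, Set.union_assoc, hunion]

lemma Aset_removed (hE : ∀ e ∈ E, ¬ e.IsDiag) (hF : IsMaxMatching E F) :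
    Aset (avoid E (Aset E)) = ∅ := by
  obtain ⟨-, hD⟩ := removeA (Aset E).ncard E F hE hF le_rfl
  ext x
  simp only [Set.mem_empty_iff_false, iff_false]
  rintro ⟨hx, y, hy, hedge⟩
  rw [hD] at hx hy
  have hyA : y ∉ Aset E := fun h => hedge.2 y (Sym2.mem_iff.2 (Or.inr rfl)) h
  have hyD : y ∈ Dset E := by
    rcases hy with h | h
    · exact h
    · exact absurd h hyA
  exact (fun h => hx (Or.inr h)) ⟨fun h => hx (Or.inl h), y, hyD, hedge.1⟩

end Remove
section Comp
variable {E₀ M : Set (Sym2 V)} {v u w : V}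

lemma mem_comp_self : v ∈ comp E₀ v := Relation.ReflTransGen.refl

lemma comp_symmetric : Symmetric (fun a b : V => s(a, b) ∈ E₀) := by
  intro a b h
  rwa [Sym2.eq_swap]

lemma comp_closed (hu : u ∈ comp E₀ v) (he : s(u, w) ∈ E₀) : w ∈ comp E₀ v :=
  Relation.ReflTransGen.tail hu he

lemma comp_eq_of_mem (hu : u ∈ comp E₀ v) : comp E₀ u = comp E₀ v := by
  ext z
  constructor
  · intro hz
    exact Relation.ReflTransGen.trans hu hz
  · intro hz
    exact Relation.ReflTransGen.trans
      ((@Relation.ReflTransGen.stdSymm _ _ ⟨fun _ _ h => comp_symmetric h⟩).symm _ _ hu) hz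

lemma edgesIn_subset {C : Set V} : edgesIn M C ⊆ M := fun e he => he.1

lemma edgesIn_mono {C : Set V} {M N : Set (Sym2 V)} (h : M ⊆ N) : edgesIn M C ⊆ edgesIn N C :=
  fun e he => ⟨h he.1, he.2⟩

/-- restriction of a maximum matching to an edge-closed vertex set is maximum -/
lemma max_restrict [Fintype V] {C : Set V} (hM : IsMaxMatching E₀ M)
    (hC : ∀ u w, u ∈ C → s(u, w) ∈ E₀ → w ∈ C) :
    IsMaxMatching (edgesIn E₀ C) (edgesIn M C) := by
  have htouch : ∀ e ∈ M, (∃ u ∈ e, u ∈ C) → e ∈ edgesIn M C := by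
    rintro e he ⟨u, hu, huC⟩
    obtain ⟨a, b, rfl⟩ : ∃ a b, e = s(a,b) := by
      induction e using Sym2.ind with | _ a b => exact ⟨a,b,rfl⟩
    have hab : s(a,b) ∈ E₀ := hM.1 he
    rcases Sym2.mem_iff.1 hu with rfl | rfl
    · refine ⟨he, fun z hz => ?_⟩
      rcases Sym2.mem_iff.1 hz with rfl | rfl
      · exact huC
      · exact hC _ _ huC hab
    · refine ⟨he, fun z hz => ?_⟩
      rcases Sym2.mem_iff.1 hz with rfl | rfl
      · exact hC _ _ huC (Sym2.eq_swap ▸ hab)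
      · exact huC
  refine ⟨edgesIn_mono hM.1, hM.2.1.subset edgesIn_subset, ?_⟩
  intro P hPE hPm
  by_contra hlt
  push_neg at hlt
  set M' := P ∪ (M \ edgesIn M C) with hM'def
  have hPC : ∀ e ∈ P, ∀ u ∈ e, u ∈ C := fun e he => (hPE he).2
  have hrestC : ∀ e ∈ M \ edgesIn M C, ∀ u ∈ e, u ∉ C := by
    rintro e ⟨he, hne⟩ u hu huC
    exact hne (htouch e he ⟨u, hu, huC⟩)
  have hM' : IsMatching M' := by
    constructor
    · rintro e (he | he)
      · exact hPm.1 e he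
      · exact hM.2.1.1 e he.1
    · rintro e (he | he) f (hf | hf) hef z hz hz'
      · exact hPm.2 e he f hf hef z hz hz'
      · exact hrestC f hf z hz' (hPC e he z hz)
      · exact hrestC e he z hz (hPC f hf z hz')
      · exact hM.2.1.2 e he.1 f hf.1 hef z hz hz'
  have hM'E : M' ⊆ E₀ := by
    rintro e (he | he)
    · exact (hPE he).1
    · exact hM.1 he.1
  have hdisj : Disjoint P (M \ edgesIn M C) := by
    rw [Set.disjoint_left]
    intro e he hf
    obtain ⟨a, b, rfl⟩ : ∃ a b, e = s(a,b) := by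
      induction e using Sym2.ind with | _ a b => exact ⟨a,b,rfl⟩
    exact hrestC _ hf a (Sym2.mem_iff.2 (Or.inl rfl)) (hPC _ he a (Sym2.mem_iff.2 (Or.inl rfl)))
  have hcard : M'.ncard = P.ncard + (M \ edgesIn M C).ncard :=
    Set.ncard_union_eq hdisj (Set.toFinite _) (Set.toFinite _)
  have hdiff : (M \ edgesIn M C).ncard = M.ncard - (edgesIn M C).ncard :=
    Set.ncard_diff edgesIn_subset (Set.toFinite _)
  have hle : (edgesIn M C).ncard ≤ M.ncard := Set.ncard_le_ncard edgesIn_subset (Set.toFinite _)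
  have := hM.2.2 M' hM'E hM'
  omega

end Comp
section Count
variable {M : Set (Sym2 V)}

lemma covered_ncard [Fintype V] (hM : IsMatching M) :
    {v | covered M v}.ncard = 2 * M.ncard := by
  classical
  have key : ∀ s : Set (Sym2 V), s.Finite → IsMatching s →
      {v | covered s v}.ncard = 2 * s.ncard := by
    intro s hs
    refine Set.Finite.induction_on
      (motive := fun s _ => IsMatching s → {v | covered s v}.ncard = 2 * s.ncard) s hs ?_ ?_
    · intro _
      have : {v : V | covered ∅ v} = ∅ := by
        ext v; simp [covered]
      simp [this]
    · intro e s' hes hs' IH hmat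
      have hmat' : IsMatching s' := hmat.subset (Set.subset_insert _ _)
      obtain ⟨a, b, rfl⟩ : ∃ a b, e = s(a,b) := by
        induction e using Sym2.ind with | _ a b => exact ⟨a,b,rfl⟩
      have hab : a ≠ b := fun h =>
        hmat.1 _ (Set.mem_insert _ _) (h ▸ Sym2.mk_isDiag_iff.2 rfl)
      have hset : {v | covered (insert s(a,b) s') v} = {a, b} ∪ {v | covered s' v} := by
        ext v
        rw [Set.mem_setOf_eq, covered_insert, Sym2.mem_iff]
        simp [Set.mem_insert_iff]
      have hdisj : Disjoint ({a, b} : Set V) {v | covered s' v} := by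
        rw [Set.disjoint_left]
        rintro v hv ⟨f, hf, hvf⟩
        have hv' : v ∈ s(a,b) := by
          rcases hv with rfl | rfl
          · exact Sym2.mem_iff.2 (Or.inl rfl)
          · exact Sym2.mem_iff.2 (Or.inr rfl)
        exact hmat.2 _ (Set.mem_insert _ _) f (Set.mem_insert_of_mem _ hf)
          (fun h => hes (h ▸ hf)) v hv' hvf
      rw [hset, Set.ncard_union_eq hdisj (Set.toFinite _) (Set.toFinite _),
        Set.ncard_pair hab, IH hmat',
        Set.ncard_insert_of_notMem hes (Set.toFinite _)]
      ring
  exact key M (Set.toFinite _) hM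

end Count

section Path
variable {E₀ H : Set (Sym2 V)} {u v w x y : V}

lemma rtg_path {r : V → V → Prop} (h : Relation.ReflTransGen r x y) :
    ∃ p : List V, p.Chain' r ∧ p.head? = some x ∧ p.getLast? = some y := by
  induction h with
  | refl => exact ⟨[x], List.isChain_singleton x, rfl, rfl⟩
  | @tail b c hab hbc IH =>
    obtain ⟨p, hc, hh, hl⟩ := IH
    have hp : p ≠ [] := by rintro rfl; simp at hh
    refine ⟨p ++ [c], ?_, ?_, ?_⟩
    · rw [show List.Chain' r (p ++ [c]) ↔ List.IsChain r (p ++ [c]) from Iff.rfl, List.isChain_append]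
      refine ⟨hc, List.isChain_singleton c, ?_⟩
      intro z hz z' hz'
      simp only [List.head?_cons, Option.mem_def, Option.some.injEq] at hz'
      rw [hl] at hz
      simp only [Option.mem_def, Option.some.injEq] at hz
      subst hz hz'
      exact hbc
    · cases p with
      | nil => exact absurd rfl hp
      | cons a t => simpa using hh
    · simp [List.getLast?_concat]

lemma comp_rtg_in (hu : u ∈ comp E₀ v) :
    Relation.ReflTransGen (fun a b => s(a,b) ∈ edgesIn E₀ (comp E₀ v)) v u := by
  induction hu with
  | refl => exact Relation.ReflTransGen.refl
  | @tail b c hab hbc IH =>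
    refine IH.tail ⟨hbc, ?_⟩
    intro z hz
    rcases Sym2.mem_iff.1 hz with rfl | rfl
    · exact hab
    · exact comp_closed hab hbc

lemma comp_connect (hu : u ∈ comp E₀ v) (hw : w ∈ comp E₀ v) :
    ∃ p : List V, p.Chain' (fun a b => s(a,b) ∈ edgesIn E₀ (comp E₀ v)) ∧
      p.head? = some u ∧ p.getLast? = some w := by
  have h1 := (@Relation.ReflTransGen.stdSymm _ _ ⟨fun _ _ h => comp_symmetric h⟩).symm _ _ (comp_rtg_in hu)
  exact rtg_path (h1.trans (comp_rtg_in hw))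

end Path

section Gallai
variable [Fintype V] {H : Set (Sym2 V)} {Cs : Set V}

lemma gallai_aux (hH : ∀ e ∈ H, ¬ e.IsDiag) (hHC : ∀ e ∈ H, ∀ u ∈ e, u ∈ Cs)
    (hcrit : ∀ z ∈ Cs, ∃ N', IsMaxMatching H N' ∧ ¬ covered N' z) :
    ∀ L : ℕ, ∀ N, IsMaxMatching H N → ∀ x y, x ≠ y → ¬ covered N x → ¬ covered N y →
    ∀ p : List V, p.Chain' (fun a b => s(a,b) ∈ H) → p.head? = some x →
    p.getLast? = some y → p.length ≤ L → False := by
  intro L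
  induction L with
  | zero =>
    intro N hN x y hxy hx hy p hchain hhead hlast hlen
    have : p = [] := List.length_eq_zero_iff.1 (by omega)
    subst this
    simp at hhead
  | succ L IH =>
    intro N hN x y hxy hx hy p hchain hhead hlast hlen
    match p, hchain, hhead, hlast, hlen with
    | [a], _, hhead, hlast, _ =>
      simp only [List.head?_cons, Option.some.injEq] at hhead
      simp only [List.getLast?_singleton, Option.some.injEq] at hlast
      exact hxy (hhead ▸ hlast ▸ rfl)
    | a :: b :: rest, hchain, hhead, hlast, hlen =>
      simp only [List.head?_cons, Option.some.injEq] at hhead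
      subst hhead
      obtain ⟨hedge, hchain'⟩ := List.isChain_cons_cons.1 hchain
      have hxb : a ≠ b := fun h => hH _ hedge (h ▸ Sym2.mk_isDiag_iff.2 rfl)
      by_cases hcb : covered N b
      · have hbC : b ∈ Cs := hHC _ hedge b (Sym2.mem_iff.2 (Or.inr rfl))
        have hby : b ≠ y := fun h => hy (h ▸ hcb)
        obtain ⟨N', hN', hN'b⟩ := hcrit b hbC
        have hsubH : N ∪ N' ⊆ H := Set.union_subset hN.1 hN'.1
        rcases transfer hN.2.1 hN'.2.1 hcb hN'b with
          ⟨Np, Mp, t, htb, htN, htN', hsubN, hmatN, hcardN, hcovN, _, _, _, _⟩ |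
          ⟨Mh, t, htb, htN, htN', hsub, hmat, hcard, hcov⟩
        · have := hN'.2.2 Np (hsubN.trans hsubH) hmatN
          omega
        · have hMh : IsMaxMatching H Mh := hN.of_ncard_eq (hsub.trans hsubH) hmat hcard
          have hMhb : ¬ covered Mh b := by
            rw [hcov]
            rintro (⟨-, h⟩ | h)
            · exact h rfl
            · exact htb h.symm
          rcases eq_or_ne t y with rfl | hty
          · -- t = y : x and b both missed by Mh, adjacent
            have hMhx : ¬ covered Mh a := by
              rw [hcov]
              rintro (⟨h, -⟩ | rfl)
              · exact hx h
              · exact hxy rfl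
            have hnotmem : s(a,b) ∉ Mh := fun h => hMhx ⟨_, h, Sym2.mem_iff.2 (Or.inl rfl)⟩
            have hmat2 : IsMatching (insert s(a,b) Mh) := by
              refine hmat.insert (hH _ hedge) ?_
              intro z hz
              rcases Sym2.mem_iff.1 hz with rfl | rfl
              · exact hMhx
              · exact hMhb
            have := hN.2.2 _ (Set.insert_subset hedge (hsub.trans hsubH)) hmat2
            rw [Set.ncard_insert_of_notMem hnotmem (Set.toFinite _)] at this
            omega
          · have hMhy : ¬ covered Mh y := by
              rw [hcov]
              rintro (⟨h, -⟩ | rfl)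
              · exact hy h
              · exact hty rfl
            refine IH Mh hMh b y hby hMhb hMhy (b :: rest) hchain' rfl ?_ ?_
            · rw [← hlast, List.getLast?_cons_cons]
            · simp only [List.length_cons] at hlen ⊢
              omega
      · -- b not covered by N : augment
        have hnotmem : s(a,b) ∉ N := fun h => hx ⟨_, h, Sym2.mem_iff.2 (Or.inl rfl)⟩
        have hmat2 : IsMatching (insert s(a,b) N) := by
          refine hN.2.1.insert (hH _ hedge) ?_
          intro z hz
          rcases Sym2.mem_iff.1 hz with rfl | rfl
          · exact hx
          · exact hcb
        have := hN.2.2 _ (Set.insert_subset hedge hN.1) hmat2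
        rw [Set.ncard_insert_of_notMem hnotmem (Set.toFinite _)] at this
        omega

lemma gallai (hH : ∀ e ∈ H, ¬ e.IsDiag) (hHC : ∀ e ∈ H, ∀ u ∈ e, u ∈ Cs)
    (hcrit : ∀ z ∈ Cs, ∃ N', IsMaxMatching H N' ∧ ¬ covered N' z)
    (hconn : ∀ u ∈ Cs, ∀ w ∈ Cs, ∃ p : List V, p.Chain' (fun a b => s(a,b) ∈ H) ∧
      p.head? = some u ∧ p.getLast? = some w) :
    ∀ w ∈ Cs, ∃ N, IsMaxMatching H N ∧ ¬ covered N w ∧ ∀ u ∈ Cs, u ≠ w → covered N u := by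
  intro w hw
  obtain ⟨N, hN, hNw⟩ := hcrit w hw
  refine ⟨N, hN, hNw, fun u hu huw => ?_⟩
  by_contra hcu
  obtain ⟨p, hchain, hhead, hlast⟩ := hconn w hw u hu
  exact gallai_aux hH hHC hcrit p.length N hN w u (fun h => huw h.symm) hNw hcu
    p hchain hhead hlast le_rfl

end Gallai

end GEproof

/-- Gallai–Edmonds: every maximum matching `F` of a graph admits a
Gallai–Edmonds decomposition `(Q, R, S)`. -/
theorem stmt_10 {V : Type*} [Fintype V] (E F : Set (Sym2 V))
    (hE : ∀ e ∈ E, ¬ e.IsDiag) (hF : IsMaxMatching E F) :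
    ∃ Q R S : Set V, IsGE E F Q R S := by
  classical
  obtain ⟨hF'max, hD'⟩ := removeA (Aset E).ncard E F hE hF le_rfl
  have hApartner : ∀ a ∈ Aset E, ∃ t, s(a,t) ∈ F ∧ t ∈ Dset E := by
    intro a ha
    have hcov := covered_of_max hF ha.1
    obtain ⟨t, ht⟩ := covered_iff.1 hcov
    have hts : t ≠ a := (ne_of_mk_mem hF.2.1 ht).symm
    have hF₁ := (stab_nu hF ha.1).1
    have hnt : ¬ covered {e ∈ F | a ∉ e} t := by
      rintro ⟨e, ⟨heF, hae⟩, hte⟩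
      have he : e = s(a,t) := hF.2.1.eq_of_mem heF ht hte (Sym2.mem_iff.2 (Or.inr rfl))
      exact hae (he ▸ Sym2.mem_iff.2 (Or.inl rfl))
    have htD : t ∈ Dset (avoid E {a}) := ⟨_, hF₁, hnt⟩
    rcases stab_hard hE ha htD with h | h
    · exact ⟨t, ht, h⟩
    · exact absurd h hts
  have hcompD : ∀ v ∈ Dset E, comp (avoid E (Aset E)) v ⊆ Dset E := by
    intro v hv u hu
    induction hu with
    | refl => exact hv
    | @tail b c hab hbc IH =>
      have hcA : c ∉ Aset E := hbc.2 c (Sym2.mem_iff.2 (Or.inr rfl))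
      by_contra hcD
      exact hcA ⟨hcD, b, IH, by rw [Sym2.eq_swap]; exact hbc.1⟩
  refine ⟨(Dset E ∪ Aset E)ᶜ, Dset E, Aset E, ?_, ?_, ?_, ?_, ?_, ?_, ?_⟩
  · rw [Set.union_assoc]
    exact Set.compl_union_self _
  · exact Set.disjoint_left.2 (fun x hx hD => hx (Or.inl hD))
  · exact Set.disjoint_left.2 (fun x hx hA => hx (Or.inr hA))
  · exact Set.disjoint_left.2 (fun x hx hA => hA.1 hx)
  · -- condition (1) : Q is perfectly matched
    intro v hv
    have hvD : v ∉ Dset E := fun h => hv (Or.inl h)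
    have hvA : v ∉ Aset E := fun h => hv (Or.inr h)
    obtain ⟨w, hw⟩ := covered_iff.1 (covered_of_max hF hvD)
    have hwD : w ∉ Dset E := fun h => hvA ⟨hvD, w, h, hF.1 hw⟩
    have hwA : w ∉ Aset E := by
      intro h
      obtain ⟨t, htF, htD⟩ := hApartner w h
      have htv : t = v := partner_unique hF.2.1 htF (by rw [Sym2.eq_swap]; exact hw)
      exact hvD (htv ▸ htD)
    refine ⟨s(v,w), ⟨hw, ?_⟩, Sym2.mem_iff.2 (Or.inl rfl)⟩
    intro u hu
    rcases Sym2.mem_iff.1 hu with rfl | rfl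
    · exact hv
    · rintro (h | h)
      · exact hwD h
      · exact hwA h
  · -- condition (2) : components of R
    intro v hv
    have hCD : comp (avoid E (Aset E)) v ⊆ Dset E := hcompD v hv
    have hE'subE : avoid E (Aset E) ⊆ E := fun e he => he.1
    have hHnd : ∀ e ∈ edgesIn (avoid E (Aset E)) (comp (avoid E (Aset E)) v), ¬ e.IsDiag :=
      fun e he => hE e (hE'subE he.1)
    have hHC : ∀ e ∈ edgesIn (avoid E (Aset E)) (comp (avoid E (Aset E)) v),
        ∀ u ∈ e, u ∈ comp (avoid E (Aset E)) v := fun e he => he.2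
    have hcrit : ∀ z ∈ comp (avoid E (Aset E)) v,
        ∃ N', IsMaxMatching (edgesIn (avoid E (Aset E)) (comp (avoid E (Aset E)) v)) N' ∧
          ¬ covered N' z := by
      intro z hz
      have hzD' : z ∈ Dset (avoid E (Aset E)) := by rw [hD']; exact Or.inl (hCD hz)
      obtain ⟨M, hM, hMz⟩ := hzD'
      exact ⟨edgesIn M _, max_restrict hM (fun u w hu he => comp_closed hu he),
        not_covered_of_subset edgesIn_subset hMz⟩
    have hgal := gallai hHnd hHC hcrit (fun u hu w hw => comp_connect hu hw)
    refine ⟨hCD, ?_, ?_⟩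
    · -- hypomatchable
      intro w hw
      obtain ⟨N, hN, hNw, hNcov⟩ := hgal w hw
      exact ⟨N, hN.1.trans (edgesIn_mono hE'subE), hN.2.1, hNw, hNcov⟩
    · -- unique exposed vertex
      have hFC_eq : edgesIn {e ∈ F | ∀ u ∈ e, u ∉ Aset E} (comp (avoid E (Aset E)) v) =
          edgesIn F (comp (avoid E (Aset E)) v) := by
        ext e
        constructor
        · rintro ⟨⟨heF, -⟩, hin⟩; exact ⟨heF, hin⟩
        · rintro ⟨heF, hin⟩
          exact ⟨⟨heF, fun u hu huA => huA.1 (hCD (hin u hu))⟩, hin⟩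
      have hFCmax : IsMaxMatching (edgesIn (avoid E (Aset E)) (comp (avoid E (Aset E)) v))
          (edgesIn F (comp (avoid E (Aset E)) v)) := by
        rw [← hFC_eq]
        exact max_restrict hF'max (fun u w hu he => comp_closed hu he)
      obtain ⟨N, hN, hNv, hNcov⟩ := hgal v mem_comp_self
      have hNset : {u | covered N u} = comp (avoid E (Aset E)) v \ {v} := by
        ext u
        constructor
        · rintro ⟨e, he, hue⟩
          refine ⟨hHC e (hN.1 he) u hue, ?_⟩
          simp only [Set.mem_singleton_iff]
          rintro rfl
          exact hNv ⟨e, he, hue⟩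
        · rintro ⟨huC, hune⟩
          exact hNcov u huC (by simpa using hune)
      have h1 : (comp (avoid E (Aset E)) v \ {v}).ncard + 1 = (comp (avoid E (Aset E)) v).ncard :=
        Set.ncard_diff_singleton_add_one mem_comp_self (Set.toFinite _)
      have h2 : {u | covered N u}.ncard = 2 * N.ncard := covered_ncard hN.2.1
      rw [hNset] at h2
      have hFCsub : {u | covered (edgesIn F (comp (avoid E (Aset E)) v)) u} ⊆
          comp (avoid E (Aset E)) v := by
        rintro u ⟨e, he, hue⟩
        exact he.2 u hue
      have h3 : {u | covered (edgesIn F (comp (avoid E (Aset E)) v)) u}.ncard = 2 * N.ncard := by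
        rw [covered_ncard hFCmax.2.1, maxMatching_ncard_eq hFCmax hN]
      have hU : (comp (avoid E (Aset E)) v \ {u | covered (edgesIn F (comp (avoid E (Aset E)) v)) u}).ncard = 1 := by
        rw [Set.ncard_diff hFCsub (Set.toFinite _)]
        omega
      obtain ⟨w₀, hw₀⟩ := Set.ncard_eq_one.1 hU
      have hmem : w₀ ∈ comp (avoid E (Aset E)) v \ {u | covered (edgesIn F (comp (avoid E (Aset E)) v)) u} := by
        rw [hw₀]; exact rfl
      refine ⟨w₀, ⟨hmem.1, hmem.2⟩, ?_⟩
      rintro w ⟨hwC, hwnc⟩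
      have hwmem : w ∈ comp (avoid E (Aset E)) v \ {u | covered (edgesIn F (comp (avoid E (Aset E)) v)) u} := ⟨hwC, hwnc⟩
      rw [hw₀] at hwmem
      simpa using hwmem
  · -- condition (3) : S is matched into exposed vertices
    intro a ha
    obtain ⟨t, htF, htD⟩ := hApartner a ha
    refine ⟨t, htF, htD, ?_⟩
    rintro ⟨e, ⟨heF, hin⟩, hte⟩
    have he : e = s(a,t) := hF.2.1.eq_of_mem heF htF hte (Sym2.mem_iff.2 (Or.inr rfl))
    have haC : a ∈ comp (avoid E (Aset E)) t := hin a (he ▸ Sym2.mem_iff.2 (Or.inl rfl))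
    exact ha.1 (hcompD t htD haC)
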